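/- For every countable ordinal α ≥ 2, the ideal conv_α contains an isomorphic copy of itself via a one-to-one map into conv_α ⊗ {∅}; that is, conv_α ⊑ conv_α ⊗ {∅}. -/

import Mathlib

open Set Filter Topology Ordinal

noncomputable section

/-- The derived set of `A`: the set of accumulation (limit) points of `A`. -/
def derivSet {X : Type*} [TopologicalSpace X] (A : Set X) : Set X :=
  {p | p ∈ closure (A \ {p})}

/-- The ordinal space `ω^a + 1 = [0, ω^a]` with the (order) topology. -/
abbrev OrdSpace (a : Ordinal) : Type _ := ↥(Set.Iic (omega0 ^ a))

/-- The ideal `conv_a` on `ω^a + 1`: sets with finite derived set. -/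
def convIdeal (a : Ordinal) : Set (Set (OrdSpace a)) :=
  {A | (derivSet A).Finite}

/-- `I` is an ideal of subsets. -/
structure IsIdeal {S : Type*} (I : Set (Set S)) : Prop where
  empty_mem : ∅ ∈ I
  subset_mem : ∀ {A B : Set S}, A ⊆ B → B ∈ I → A ∈ I
  union_mem : ∀ {A B : Set S}, A ∈ I → B ∈ I → A ∪ B ∈ I

/-- The subsequence of `f` indexed by `A` converges to `x`. -/
def ConvAlong {X : Type*} [TopologicalSpace X] (f : ℕ → X) (A : Set ℕ) (x : X) : Prop :=
  ∀ U ∈ nhds x, {n ∈ A | f n ∉ U}.Finite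

/-- Katětov order: `J ≤_K I`, where `I` lives on `X` and `J` on `Y`. -/
def KatetovLE {X Y : Type*} (J : Set (Set Y)) (I : Set (Set X)) : Prop :=
  ∃ f : X → Y, ∀ A ∈ J, f ⁻¹' A ∈ I

/-- `X ∈ FinBW(I)`: every sequence in `X` has a convergent subsequence indexed
by an `I`-positive set. -/
def InFinBW (I : Set (Set ℕ)) (X : Type*) [TopologicalSpace X] : Prop :=
  ∀ f : ℕ → X, ∃ A : Set ℕ, A ∉ I ∧ ∃ x : X, ConvAlong f A x

/-- `conv_α ⊑ conv_α ⊗ {∅}`: there is a one-to-one map `f : (ω^α+1) × ω → ω^α+1` with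
`f⁻¹[A] ∈ conv_α ⊗ {∅}` for every `A ∈ conv_α`. -/
noncomputable def natOf (o : Ordinal) : ℕ :=
  if h : o < omega0 then Classical.choose (Ordinal.lt_omega0.mp h) else 0

lemma natOf_spec {o : Ordinal} (h : o < omega0) : ((natOf o : ℕ) : Ordinal) = o := by
  rw [natOf, dif_pos h]
  exact (Classical.choose_spec (Ordinal.lt_omega0.mp h)).symm

noncomputable def F0 (x : Ordinal) (n : ℕ) : Ordinal :=
  omega0 * (x / omega0) + ((2 * Nat.pair (natOf (x % omega0)) n + 1 : ℕ) : Ordinal)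

lemma le_F0 (x : Ordinal) (n : ℕ) : x ≤ F0 x n := by
  have hk := natOf_spec (Ordinal.mod_lt x Ordinal.omega0_ne_zero)
  calc x = omega0 * (x / omega0) + x % omega0 := (Ordinal.div_add_mod x omega0).symm
    _ = omega0 * (x / omega0) + ((natOf (x % omega0) : ℕ) : Ordinal) := by rw [hk]
    _ ≤ omega0 * (x / omega0)
        + ((2 * Nat.pair (natOf (x % omega0)) n + 1 : ℕ) : Ordinal) :=
      add_le_add_right (Nat.cast_le.mpr
        (by have := Nat.left_le_pair (natOf (x % omega0)) n; omega)) _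
    _ = F0 x n := rfl

lemma add_nat_lt {x z : Ordinal} (hz : Order.IsSuccLimit z) (hx : x < z) (n : ℕ) :
    x + (n : Ordinal) < z := by
  induction n with
  | zero => simpa using hx
  | succ m ih =>
      have h1 : ((m + 1 : ℕ) : Ordinal) = (m : Ordinal) + 1 := Nat.cast_succ m
      rw [h1, ← add_assoc, ← Order.succ_eq_add_one]
      exact hz.succ_lt ih

lemma add_omega0_le {x z : Ordinal} (hz : Order.IsSuccLimit z) (hx : x < z) : x + omega0 ≤ z := by
  rw [Ordinal.add_le_iff_of_isSuccLimit Ordinal.isSuccLimit_omega0]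
  intro b hb
  obtain ⟨n, rfl⟩ := Ordinal.lt_omega0.mp hb
  exact (add_nat_lt hz hx n).le

lemma F0_lt {x z : Ordinal} (hz : Order.IsSuccLimit z) (hx : x < z) (n : ℕ) : F0 x n < z := by
  have h1 : F0 x n < omega0 * (x / omega0) + omega0 :=
    add_lt_add_right (Ordinal.nat_lt_omega0 _) _
  have h2 : omega0 * (x / omega0) + omega0 ≤ x + omega0 :=
    add_le_add_left (Ordinal.mul_div_le x omega0) _
  exact h1.trans_le (h2.trans (add_omega0_le hz hx))

lemma F0_inj {x y : Ordinal} {m n : ℕ} (hx : x % omega0 < omega0) (hy : y % omega0 < omega0)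
    (h : F0 x m = F0 y n) : x = y ∧ m = n := by
  unfold F0 at h
  -- recover quotients
  have hq : x / omega0 = y / omega0 := by
    have h2 := congrArg (· / omega0) h
    rw [Ordinal.mul_add_div _ Ordinal.omega0_ne_zero,
        Ordinal.mul_add_div _ Ordinal.omega0_ne_zero,
        Ordinal.div_eq_zero_of_lt (Ordinal.nat_lt_omega0 _),
        Ordinal.div_eq_zero_of_lt (Ordinal.nat_lt_omega0 _), add_zero, add_zero] at h2
    exact h2
  rw [hq] at h
  have hm : ((2 * Nat.pair (natOf (x % omega0)) m + 1 : ℕ) : Ordinal)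
      = ((2 * Nat.pair (natOf (y % omega0)) n + 1 : ℕ) : Ordinal) :=
    (add_right_inj _).mp h
  have hm' : 2 * Nat.pair (natOf (x % omega0)) m + 1
      = 2 * Nat.pair (natOf (y % omega0)) n + 1 := by exact_mod_cast hm
  have hpair : Nat.pair (natOf (x % omega0)) m = Nat.pair (natOf (y % omega0)) n := by omega
  obtain ⟨hk, hmn⟩ := Nat.pair_eq_pair.mp hpair
  refine ⟨?_, hmn⟩
  have hmod : x % omega0 = y % omega0 := by
    rw [← natOf_spec hx, ← natOf_spec hy, hk]
  calc x = omega0 * (x / omega0) + x % omega0 := (Ordinal.div_add_mod x omega0).symm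
    _ = omega0 * (y / omega0) + y % omega0 := by rw [hq, hmod]
    _ = y := Ordinal.div_add_mod y omega0

theorem stmt16 (a : Ordinal) (ha : 2 ≤ a) (hac : a.card ≤ Cardinal.aleph0) :
    ∃ f : (OrdSpace a × ℕ) → OrdSpace a, Function.Injective f ∧
      ∀ A ∈ convIdeal a,
        {ξ : OrdSpace a | {n : ℕ | (ξ, n) ∈ f ⁻¹' A}.Nonempty} ∈ convIdeal a := by
  have ha0 : a ≠ 0 := by
    rintro rfl; exact absurd ha (by norm_num)
  have htop : Order.IsSuccLimit (omega0 ^ a) := isSuccLimit_opow_left isSuccLimit_omega0 ha0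
  have homega_le : omega0 ≤ omega0 ^ a := by
    calc omega0 = omega0 ^ (1 : Ordinal) := (opow_one _).symm
      _ ≤ omega0 ^ a := opow_le_opow_right omega0_pos (le_trans (by norm_num) ha)
  have hnat_le : ∀ n : ℕ, ((n : Ordinal)) ≤ omega0 ^ a := fun n =>
    ((Ordinal.nat_lt_omega0 n).le.trans homega_le)
  -- the map
  set f : (OrdSpace a × ℕ) → OrdSpace a := fun p =>
    if h : (p.1 : Ordinal) = omega0 ^ a then ⟨((2 * p.2 : ℕ) : Ordinal), hnat_le _⟩
    else ⟨F0 p.1 p.2, (F0_lt htop (lt_of_le_of_ne p.1.2 h) p.2).le⟩ with hf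
  refine ⟨f, ?_, ?_⟩
  · -- injectivity
    rintro ⟨⟨x, hx⟩, m⟩ ⟨⟨y, hy⟩, n⟩ h
    simp only [hf] at h
    by_cases hxt : x = omega0 ^ a <;> by_cases hyt : y = omega0 ^ a
    · rw [dif_pos hxt, dif_pos hyt] at h
      have : ((2 * m : ℕ) : Ordinal) = ((2 * n : ℕ) : Ordinal) := congrArg Subtype.val h
      have : 2 * m = 2 * n := by exact_mod_cast this
      simp only [Prod.mk.injEq, Subtype.mk.injEq]
      exact ⟨hxt.trans hyt.symm, by omega⟩
    · exfalso
      rw [dif_pos hxt, dif_neg hyt] at h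
      have hval : ((2 * m : ℕ) : Ordinal) = F0 y n := congrArg Subtype.val h
      -- F0 y n is either an odd nat or ≥ ω
      rcases eq_or_ne (y / omega0) 0 with hq | hq
      · rw [F0, hq, mul_zero, zero_add] at hval
        have : 2 * m = 2 * Nat.pair (natOf (y % omega0)) n + 1 := by exact_mod_cast hval
        omega
      · have : omega0 ≤ F0 y n := by
          rw [F0]
          calc omega0 = omega0 * 1 := (mul_one _).symm
            _ ≤ omega0 * (y / omega0) :=
              mul_le_mul_right (Ordinal.one_le_iff_ne_zero.mpr hq) _
            _ ≤ _ := le_add_right le_rfl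
        exact absurd (hval ▸ this) (not_le.mpr (Ordinal.nat_lt_omega0 _))
    · exfalso
      rw [dif_neg hxt, dif_pos hyt] at h
      have hval : F0 x m = ((2 * n : ℕ) : Ordinal) := congrArg Subtype.val h
      rcases eq_or_ne (x / omega0) 0 with hq | hq
      · rw [F0, hq, mul_zero, zero_add] at hval
        have : 2 * Nat.pair (natOf (x % omega0)) m + 1 = 2 * n := by exact_mod_cast hval
        omega
      · have : omega0 ≤ F0 x m := by
          rw [F0]
          calc omega0 = omega0 * 1 := (mul_one _).symm
            _ ≤ omega0 * (x / omega0) :=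
              mul_le_mul_right (Ordinal.one_le_iff_ne_zero.mpr hq) _
            _ ≤ _ := le_add_right le_rfl
        exact absurd (hval ▸ this) (not_le.mpr (Ordinal.nat_lt_omega0 _))
    · rw [dif_neg hxt, dif_neg hyt] at h
      have hval : F0 x m = F0 y n := congrArg Subtype.val h
      obtain ⟨hxy, hmn⟩ := F0_inj (Ordinal.mod_lt _ Ordinal.omega0_ne_zero)
        (Ordinal.mod_lt _ Ordinal.omega0_ne_zero) hval
      simp [Prod.mk.injEq, Subtype.mk.injEq, hxy, hmn]
  · -- the ideal condition
    intro A hA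
    set B : Set (OrdSpace a) := {ξ | {n : ℕ | (ξ, n) ∈ f ⁻¹' A}.Nonempty} with hB
    have key : derivSet B ⊆ derivSet A := by
      rintro ζ hζ
      -- ζ is a limit ordinal
      have hζlim : Order.IsSuccLimit (ζ : Ordinal) := by
        by_contra hnl
        have hopen : IsOpen ({(ζ : Ordinal)} : Set Ordinal) :=
          Ordinal.isOpen_singleton_iff.mpr hnl
        have hopen' : IsOpen ((Subtype.val) ⁻¹' {(ζ : Ordinal)} : Set (OrdSpace a)) :=
          hopen.preimage continuous_subtype_val
        obtain ⟨ξ, hξU, hξB⟩ := mem_closure_iff.mp hζ _ hopen' rfl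
        exact hξB.2 (Subtype.ext hξU)
      -- show ζ ∈ closure (A \ {ζ})
      rw [derivSet, mem_setOf_eq, mem_closure_iff]
      intro U hU hζU
      obtain ⟨V, hV, rfl⟩ := isOpen_induced_iff.mp hU
      have hVnhds : V ∈ nhds (ζ : Ordinal) := hV.mem_nhds hζU
      obtain ⟨γ, hγζ, hγV⟩ := exists_Ioc_subset_of_mem_nhds hVnhds ⟨0, hζlim.pos⟩
      -- find a point of B near ζ
      have hIoo : IsOpen ((Subtype.val) ⁻¹' (Ioo γ ((ζ : Ordinal) + 1)) : Set (OrdSpace a)) :=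
        (isOpen_Ioo.preimage continuous_subtype_val)
      have hζIoo : ζ ∈ (Subtype.val) ⁻¹' (Ioo γ ((ζ : Ordinal) + 1)) :=
        ⟨hγζ, lt_add_one _⟩
      obtain ⟨ξ, hξIoo, hξB, hξne⟩ := mem_closure_iff.mp hζ _ hIoo hζIoo
      have hξlt : (ξ : Ordinal) < (ζ : Ordinal) :=
        lt_of_le_of_ne (Order.lt_add_one_iff.mp hξIoo.2) (fun hEq => hξne (Subtype.ext hEq))
      obtain ⟨n, hn⟩ := hξB
      -- f (ξ, n) ∈ A with value F0 ξ n ∈ (γ, ζ)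
      have hξnt : (ξ : Ordinal) ≠ omega0 ^ a :=
        fun hEq => absurd (hEq ▸ hξlt) (not_lt.mpr ζ.2)
      have hfval : ((f (ξ, n)) : Ordinal) = F0 ξ n := by
        simp only [hf, dif_neg hξnt]
      have hlt : F0 (ξ : Ordinal) n < (ζ : Ordinal) := F0_lt hζlim hξlt n
      have hgt : γ < F0 (ξ : Ordinal) n := hξIoo.1.trans_le (le_F0 _ n)
      refine ⟨f (ξ, n), ?_, hn, ?_⟩
      · show ((f (ξ, n)) : Ordinal) ∈ V
        exact hγV ⟨hfval ▸ hgt, hfval ▸ hlt.le⟩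
      · intro hEq
        rw [mem_singleton_iff] at hEq
        have : ((f (ξ, n)) : Ordinal) = (ζ : Ordinal) := congrArg Subtype.val hEq
        exact absurd (this ▸ (hfval ▸ hlt)) (lt_irrefl _)
    exact (hA.subset key)
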